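/- Let x, y : ℝ → ℝ be differentiable functions satisfying the autonomous system dx/dt = 2y + y·x², dy/dt = 2y − x + y³ − (x − y)³, and suppose the solution (x, y) is periodic, i.e. there exists T > 0 with x(t + T) = x(t) and y(t + T) = y(t) for all t. Then x(t) = 0 and y(t) = 0 for all t. -/

import Mathlib

/-- The phase system `x' = 2y + yx²`, `y' = 2y − x + y³ − (x−y)³` has no
nontrivial periodic solutions: any periodic solution is identically zero. -/
theorem no_nontrivial_periodic_solutions
    (x y : ℝ → ℝ) (hx : Differentiable ℝ x) (hy : Differentiable ℝ y)
    (hx' : ∀ t : ℝ, deriv x t = 2 * y t + y t * x t ^ 2)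
    (hy' : ∀ t : ℝ, deriv y t = 2 * y t - x t + y t ^ 3 - (x t - y t) ^ 3)
    (T : ℝ) (hT : 0 < T)
    (hper : ∀ t : ℝ, x (t + T) = x t ∧ y (t + T) = y t) :
    ∀ t : ℝ, x t = 0 ∧ y t = 0 := by
  set R : ℝ → ℝ := fun t => y t ^ 2 + (y t - x t) ^ 2 with hRdef
  have hR : ∀ t, HasDerivAt R (2 * R t + 2 * (R t) ^ 2) t := by
    intro t
    have h1 : HasDerivAt x (2 * y t + y t * x t ^ 2) t := hx' t ▸ (hx t).hasDerivAt
    have h2 : HasDerivAt y (2 * y t - x t + y t ^ 3 - (x t - y t) ^ 3) t :=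
      hy' t ▸ (hy t).hasDerivAt
    have h3 : HasDerivAt R _ t := (h2.pow 2).add ((h2.sub h1).pow 2)
    convert h3 using 1
    simp only [hRdef, Pi.sub_apply]
    ring
  set g : ℝ → ℝ := fun t => R t * Real.exp (-2 * t) with hgdef
  have hg : ∀ t, HasDerivAt g (2 * (R t) ^ 2 * Real.exp (-2 * t)) t := by
    intro t
    have he : HasDerivAt (fun t : ℝ => Real.exp (-2 * t)) (Real.exp (-2 * t) * -2) t := by
      have := ((hasDerivAt_id t).const_mul (-2)).exp
      simpa using this
    have h3 : HasDerivAt g _ t := (hR t).mul he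
    convert h3 using 1
    ring
  have hmono : Monotone g := by
    apply monotone_of_deriv_nonneg
    · exact fun t => (hg t).differentiableAt
    · intro t
      rw [(hg t).deriv]
      positivity
  intro t
  have hRper : R (t + T) = R t := by
    simp only [hRdef, (hper t).1, (hper t).2]
  have hle : g t ≤ g (t + T) := hmono (by linarith)
  have hexp : Real.exp (-2 * (t + T)) < Real.exp (-2 * t) := by
    apply Real.exp_lt_exp.2; linarith
  have hRnn : 0 ≤ R t := by positivity
  have hR0 : R t = 0 := by
    simp only [hgdef, hRper] at hle
    nlinarith [hle, hexp, hRnn]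
  simp only [hRdef] at hR0
  have hy0 : y t = 0 := by nlinarith [sq_nonneg (y t), sq_nonneg (y t - x t)]
  have hx0 : x t = 0 := by nlinarith [sq_nonneg (y t), sq_nonneg (y t - x t)]
  exact ⟨hx0, hy0⟩
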